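/- Let Λ, Γ be quantum channels on ℂ^d and let Φ_i, Φ_o be unital quantum channels on ℂ^d. Then d_av^ch(Φ_o ∘ Λ ∘ Φ_i, Φ_o ∘ Γ ∘ Φ_i) ≤ d_av^ch(Λ, Γ). -/

import Mathlib

open Matrix Kronecker ComplexOrder

/-- The Hilbert–Schmidt (Frobenius) norm of a complex matrix. -/
noncomputable def hsNorm {n : Type*} [Fintype n] (A : Matrix n n ℂ) : ℝ :=
  Real.sqrt ((Matrix.trace (Aᴴ * A)).re)

/-- The (normalized) Choi matrix `J_Λ = (1/d) ∑ᵢⱼ E_ij ⊗ Λ(E_ij)` of a linear map on matrices. -/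
noncomputable def choi {n : Type*} [Fintype n] [DecidableEq n]
    (Λ : Matrix n n ℂ →ₗ[ℂ] Matrix n n ℂ) : Matrix (n × n) (n × n) ℂ :=
  ((Fintype.card n : ℂ))⁻¹ •
    ∑ i, ∑ j, (Matrix.single i j (1 : ℂ)) ⊗ₖ Λ (Matrix.single i j (1 : ℂ))

/-- A quantum channel: a completely positive (positive semidefinite Choi matrix)
trace-preserving linear map. -/
def IsChannel {n : Type*} [Fintype n] [DecidableEq n]
    (Λ : Matrix n n ℂ →ₗ[ℂ] Matrix n n ℂ) : Prop :=
  (choi Λ).PosSemidef ∧ ∀ X, (Λ X).trace = X.trace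

/-- The average-case distance between quantum channels,
`(1/2) √(‖J_Λ − J_Γ‖_HS² + ‖(Λ−Γ)(I/d)‖_HS²)`. -/
noncomputable def davCh {n : Type*} [Fintype n] [DecidableEq n]
    (Λ Γ : Matrix n n ℂ →ₗ[ℂ] Matrix n n ℂ) : ℝ :=
  (1 / 2) * Real.sqrt ((hsNorm (choi Λ - choi Γ)) ^ 2 +
    (hsNorm (Λ (((Fintype.card n : ℂ))⁻¹ • 1) - Γ (((Fintype.card n : ℂ))⁻¹ • 1))) ^ 2)

section Helpers

set_option linter.unusedSectionVars false

variable {n ι κ : Type*} [Fintype n] [Fintype ι] [Fintype κ] [DecidableEq n]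

lemma retr_nonneg {m : Type*} [Fintype m] (M : Matrix m n ℂ) : 0 ≤ (Matrix.trace (Mᴴ * M)).re := by
  have h : Matrix.trace (Mᴴ * M) = ∑ j, ∑ i, (starRingEnd ℂ) (M i j) * M i j := by
    simp [Matrix.trace, Matrix.mul_apply, Matrix.diag, Matrix.conjTranspose_apply]
  rw [h, Complex.re_sum]
  refine Finset.sum_nonneg fun j _ => ?_
  rw [Complex.re_sum]
  refine Finset.sum_nonneg fun i _ => ?_
  simp [Complex.mul_re, Complex.conj_re, Complex.conj_im]
  nlinarith [sq_nonneg (M i j).re, sq_nonneg (M i j).im]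

lemma re_trace_pq {m : Type*} [Fintype m] (P Q : Matrix m n ℂ) :
    2 * (Matrix.trace (Pᴴ * Q)).re ≤ (Matrix.trace (Pᴴ * P)).re + (Matrix.trace (Qᴴ * Q)).re := by
  have h0 := retr_nonneg (P - Q)
  have hexp : Matrix.trace ((P - Q)ᴴ * (P - Q))
      = Matrix.trace (Pᴴ * P) - Matrix.trace (Pᴴ * Q) - Matrix.trace (Qᴴ * P)
        + Matrix.trace (Qᴴ * Q) := by
    simp [Matrix.conjTranspose_sub, Matrix.sub_mul, Matrix.mul_sub, Matrix.trace_sub,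
      Matrix.trace_add]
    ring
  have hconj : (Matrix.trace (Qᴴ * P)).re = (Matrix.trace (Pᴴ * Q)).re := by
    have : Qᴴ * P = (Pᴴ * Q)ᴴ := by simp [Matrix.conjTranspose_mul]
    rw [this, Matrix.trace_conjTranspose]
    simp
  rw [hexp] at h0
  simp only [Complex.add_re, Complex.sub_re] at h0
  rw [hconj] at h0
  linarith

lemma kraus_contract (A : ι → Matrix n n ℂ)
    (hTP : ∑ k, (A k)ᴴ * A k = 1) (hU : ∑ k, A k * (A k)ᴴ = 1)
    (X : Matrix n n ℂ) :
    (Matrix.trace ((∑ k, A k * X * (A k)ᴴ)ᴴ * (∑ k, A k * X * (A k)ᴴ))).re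
      ≤ (Matrix.trace (Xᴴ * X)).re := by
  classical
  set P : ι → ι → Matrix n n ℂ := fun k l => ((A k)ᴴ * A l)ᴴ * X with hP
  set Q : ι → ι → Matrix n n ℂ := fun k l => X * ((A k)ᴴ * A l)ᴴ with hQ
  have hexp : (∑ k, A k * X * (A k)ᴴ)ᴴ * (∑ k, A k * X * (A k)ᴴ)
      = ∑ k, ∑ l, (A k * X * (A k)ᴴ)ᴴ * (A l * X * (A l)ᴴ) := by
    rw [Matrix.conjTranspose_sum, Finset.sum_mul]
    exact Finset.sum_congr rfl fun k _ => by rw [Finset.mul_sum]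
  have htr : ∀ k l, Matrix.trace ((A k * X * (A k)ᴴ)ᴴ * (A l * X * (A l)ᴴ))
      = Matrix.trace ((P k l)ᴴ * (Q k l)) := by
    intro k l
    have h1 : (A k * X * (A k)ᴴ)ᴴ * (A l * X * (A l)ᴴ)
        = A k * (Xᴴ * ((A k)ᴴ * (A l * (X * (A l)ᴴ)))) := by
      simp only [Matrix.conjTranspose_mul, Matrix.conjTranspose_conjTranspose, Matrix.mul_assoc]
    rw [h1, Matrix.trace_mul_comm]
    congr 1
    simp only [hP, hQ, Matrix.conjTranspose_mul, Matrix.conjTranspose_conjTranspose,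
      Matrix.mul_assoc]
  have hSP : ∑ k, ∑ l, (Matrix.trace ((P k l)ᴴ * (P k l))).re = (Matrix.trace (Xᴴ * X)).re := by
    have hmat : ∑ k, ∑ l, (P k l)ᴴ * (P k l) = Xᴴ * X := by
      have hin : ∀ k, ∑ l, (P k l)ᴴ * (P k l) = Xᴴ * ((A k)ᴴ * (A k * X)) := by
        intro k
        have : ∀ l, (P k l)ᴴ * (P k l)
            = Xᴴ * ((A k)ᴴ * (A l * ((A l)ᴴ * (A k * X)))) := by
          intro l
          simp only [hP, Matrix.conjTranspose_mul, Matrix.conjTranspose_conjTranspose,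
            Matrix.mul_assoc]
        simp only [this, ← Finset.mul_sum]
        congr 2
        calc ∑ l, A l * ((A l)ᴴ * (A k * X)) = ∑ l, (A l * (A l)ᴴ) * (A k * X) := by
              simp only [Matrix.mul_assoc]
          _ = (∑ l, A l * (A l)ᴴ) * (A k * X) := by rw [Finset.sum_mul]
          _ = A k * X := by rw [hU, Matrix.one_mul]
      simp only [hin, ← Finset.mul_sum]
      calc Xᴴ * ∑ k, (A k)ᴴ * (A k * X) = Xᴴ * ((∑ k, (A k)ᴴ * A k) * X) := by
            rw [Finset.sum_mul]; simp only [Matrix.mul_assoc]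
        _ = Xᴴ * X := by rw [hTP, Matrix.one_mul]
    calc ∑ k, ∑ l, (Matrix.trace ((P k l)ᴴ * (P k l))).re
        = (Matrix.trace (∑ k, ∑ l, (P k l)ᴴ * (P k l))).re := by
          simp [Matrix.trace_sum, Complex.re_sum]
      _ = (Matrix.trace (Xᴴ * X)).re := by rw [hmat]
  have hSQ : ∑ k, ∑ l, (Matrix.trace ((Q k l)ᴴ * (Q k l))).re = (Matrix.trace (Xᴴ * X)).re := by
    have hterm : ∀ k l, Matrix.trace ((Q k l)ᴴ * (Q k l))
        = Matrix.trace ((A l * (Xᴴ * (X * (A l)ᴴ))) * (A k * (A k)ᴴ)) := by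
      intro k l
      have h1 : (Q k l)ᴴ * (Q k l)
          = (A k)ᴴ * (A l * (Xᴴ * (X * ((A l)ᴴ * A k)))) := by
        simp only [hQ, Matrix.conjTranspose_mul, Matrix.conjTranspose_conjTranspose,
          Matrix.mul_assoc]
      rw [h1, Matrix.trace_mul_comm]
      congr 1
      simp only [Matrix.mul_assoc]
    have hswap : ∑ k, ∑ l, (Matrix.trace ((Q k l)ᴴ * (Q k l))).re
        = ∑ l, ∑ k, (Matrix.trace ((Q k l)ᴴ * (Q k l))).re := Finset.sum_comm
    rw [hswap]
    have hinner : ∀ l, ∑ k, (Matrix.trace ((Q k l)ᴴ * (Q k l))).re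
        = (Matrix.trace (Xᴴ * (X * ((A l)ᴴ * A l)))).re := by
      intro l
      have : ∑ k, Matrix.trace ((Q k l)ᴴ * (Q k l))
          = Matrix.trace (Xᴴ * (X * ((A l)ᴴ * A l))) := by
        calc ∑ k, Matrix.trace ((Q k l)ᴴ * (Q k l))
            = ∑ k, Matrix.trace ((A l * (Xᴴ * (X * (A l)ᴴ))) * (A k * (A k)ᴴ)) := by
              exact Finset.sum_congr rfl fun k _ => hterm k l
          _ = Matrix.trace ((A l * (Xᴴ * (X * (A l)ᴴ))) * ∑ k, (A k * (A k)ᴴ)) := by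
              rw [← Matrix.trace_sum, ← Finset.mul_sum]
          _ = Matrix.trace (A l * (Xᴴ * (X * (A l)ᴴ))) := by rw [hU, Matrix.mul_one]
          _ = Matrix.trace ((Xᴴ * (X * (A l)ᴴ)) * A l) := Matrix.trace_mul_comm _ _
          _ = Matrix.trace (Xᴴ * (X * ((A l)ᴴ * A l))) := by
              congr 1; simp only [Matrix.mul_assoc]
      rw [← this, Complex.re_sum]
    simp only [hinner]
    have : ∑ l, Matrix.trace (Xᴴ * (X * ((A l)ᴴ * A l))) = Matrix.trace (Xᴴ * X) := by
      rw [← Matrix.trace_sum]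
      congr 1
      simp only [← Finset.mul_sum]
      rw [hTP, Matrix.mul_one]
    rw [← Complex.re_sum, this]
  have hbound : (Matrix.trace ((∑ k, A k * X * (A k)ᴴ)ᴴ * (∑ k, A k * X * (A k)ᴴ))).re
      = ∑ k, ∑ l, (Matrix.trace ((P k l)ᴴ * (Q k l))).re := by
    rw [hexp]
    simp only [Matrix.trace_sum, Complex.re_sum]
    exact Finset.sum_congr rfl fun k _ => Finset.sum_congr rfl fun l _ => by rw [htr]
  rw [hbound]
  have h2 : ∑ k, ∑ l, (2 * (Matrix.trace ((P k l)ᴴ * (Q k l))).re)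
      ≤ ∑ k, ∑ l, ((Matrix.trace ((P k l)ᴴ * (P k l))).re
        + (Matrix.trace ((Q k l)ᴴ * (Q k l))).re) := by
    refine Finset.sum_le_sum fun k _ => Finset.sum_le_sum fun l _ => re_trace_pq _ _
  simp only [Finset.sum_add_distrib, ← Finset.mul_sum] at h2
  rw [hSP, hSQ] at h2
  linarith

lemma choi_apply (Λ : Matrix n n ℂ →ₗ[ℂ] Matrix n n ℂ) (i a j b : n) :
    choi Λ (i, a) (j, b)
      = ((Fintype.card n : ℂ))⁻¹ * Λ (Matrix.single i j 1) a b := by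
  simp only [choi, Matrix.smul_apply, Matrix.sum_apply, Matrix.kroneckerMap_apply,
    smul_eq_mul]
  congr 1
  simp only [Matrix.single, Matrix.of_apply, ite_and, ite_mul, one_mul, zero_mul]
  rw [Finset.sum_eq_single i]
  · simp
  · intro i' _ hi'
    simp only [if_neg hi', Finset.sum_const, smul_zero]
  · simp

lemma lin_apply (Λ : Matrix n n ℂ →ₗ[ℂ] Matrix n n ℂ) (X : Matrix n n ℂ) (a b : n) :
    Λ X a b = ∑ i, ∑ j, X i j * Λ (Matrix.single i j 1) a b := by
  conv_lhs => rw [Matrix.matrix_eq_sum_single X]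
  rw [map_sum]
  simp only [Matrix.sum_apply]
  refine Finset.sum_congr rfl fun i _ => ?_
  rw [map_sum]
  simp only [Matrix.sum_apply]
  refine Finset.sum_congr rfl fun j _ => ?_
  have h : Matrix.single i j (X i j) = X i j • Matrix.single i j (1 : ℂ) := by
    rw [Matrix.smul_single, smul_eq_mul, mul_one]
  rw [h, LinearMap.map_smul, Matrix.smul_apply, smul_eq_mul]

lemma sandwich_apply' {m : Type*} [Fintype m] (U : Matrix m m ℂ) (M : Matrix m m ℂ) (x y : m) :
    (U * M * Uᴴ) x y = ∑ z, ∑ w, U x z * M z w * star (U y w) := by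
  simp only [Matrix.mul_apply, Matrix.conjTranspose_apply, Finset.sum_mul]
  rw [Finset.sum_comm]

lemma trace_std (p q : n) :
    Matrix.trace (Matrix.single p q (1 : ℂ)) = if p = q then 1 else 0 := by
  by_cases h : p = q
  · subst h
    simp [Matrix.trace, Matrix.diag, Matrix.single]
  · rw [if_neg h]
    refine Finset.sum_eq_zero fun a _ => ?_
    simp only [Matrix.diag_apply, Matrix.single, Matrix.of_apply]
    split_ifs with hh
    · exact absurd (hh.1.trans hh.2.symm) h
    · rfl

lemma exists_kraus (hn : (Fintype.card n : ℂ) ≠ 0)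
    (Λ : Matrix n n ℂ →ₗ[ℂ] Matrix n n ℂ) (hΛ : IsChannel Λ) :
    ∃ A : n × n → Matrix n n ℂ,
      (∀ X, Λ X = ∑ k, A k * X * (A k)ᴴ) ∧ ∑ k, (A k)ᴴ * A k = 1 := by
  classical
  obtain ⟨B, hB⟩ : ∃ B : Matrix (n × n) (n × n) ℂ, choi Λ = Bᴴ * B := by
    open scoped MatrixOrder Matrix.Norms.L2Operator in
    exact CStarAlgebra.nonneg_iff_eq_star_mul_self.mp hΛ.1.nonneg
  set c : ℂ := (Fintype.card n : ℂ) with hc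
  set r : ℂ := (Real.sqrt (Fintype.card n) : ℂ) with hr
  have hsq : r * r = c := by
    rw [hr, ← Complex.ofReal_mul, Real.mul_self_sqrt (by positivity)]
    simp [hc]
  have hstar : star r = r := by
    rw [hr]
    simp [Complex.star_def, Complex.conj_ofReal]
  set A : n × n → Matrix n n ℂ := fun k => Matrix.of fun a i => r * star (B k (i, a)) with hA
  refine ⟨A, ?_, ?_⟩
  · intro X
    ext a b
    rw [lin_apply]
    simp only [Matrix.sum_apply]
    symm
    calc ∑ k, (A k * X * (A k)ᴴ) a b
        = ∑ k, ∑ i, ∑ j, c * (star (B k (i, a)) * (X i j * B k (j, b))) := by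
          refine Finset.sum_congr rfl fun k _ => ?_
          rw [sandwich_apply']
          refine Finset.sum_congr rfl fun i _ => Finset.sum_congr rfl fun j _ => ?_
          simp only [hA, Matrix.of_apply, star_mul', star_star, hstar]
          rw [← hsq]; ring
      _ = ∑ i, ∑ k, ∑ j, c * (star (B k (i, a)) * (X i j * B k (j, b))) := Finset.sum_comm
      _ = ∑ i, ∑ j, ∑ k, c * (star (B k (i, a)) * (X i j * B k (j, b))) :=
          Finset.sum_congr rfl fun i _ => Finset.sum_comm
      _ = ∑ i, ∑ j, X i j * Λ (Matrix.single i j 1) a b := by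
          refine Finset.sum_congr rfl fun i _ => Finset.sum_congr rfl fun j _ => ?_
          have h1 : ∑ k, c * (star (B k (i, a)) * (X i j * B k (j, b)))
              = X i j * (c * ((Bᴴ * B) (i, a) (j, b))) := by
            simp only [Matrix.mul_apply, Matrix.conjTranspose_apply, Finset.mul_sum]
            exact Finset.sum_congr rfl fun k _ => by ring
          rw [h1, ← hB, choi_apply, ← hc, ← mul_assoc c, mul_inv_cancel₀ hn, one_mul]
  · ext i j
    calc (∑ k, (A k)ᴴ * A k) i j
        = ∑ k, ∑ a, c * (star (B k (j, a)) * B k (i, a)) := by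
          simp only [Matrix.sum_apply, Matrix.mul_apply, Matrix.conjTranspose_apply, hA,
            Matrix.of_apply, star_mul', star_star, hstar]
          refine Finset.sum_congr rfl fun k _ => Finset.sum_congr rfl fun a _ => ?_
          rw [← hsq]; ring
      _ = ∑ a, ∑ k, c * (star (B k (j, a)) * B k (i, a)) := Finset.sum_comm
      _ = ∑ a, Λ (Matrix.single j i 1) a a := by
          refine Finset.sum_congr rfl fun a _ => ?_
          have h1 : ∑ k, c * (star (B k (j, a)) * B k (i, a))
              = c * ((Bᴴ * B) (j, a) (i, a)) := by
            simp only [Matrix.mul_apply, Matrix.conjTranspose_apply, Finset.mul_sum]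
          rw [h1, ← hB, choi_apply, ← hc, ← mul_assoc c, mul_inv_cancel₀ hn, one_mul]
      _ = Matrix.trace (Λ (Matrix.single j i 1)) := rfl
      _ = Matrix.trace (Matrix.single j i (1 : ℂ)) := hΛ.2 _
      _ = (1 : Matrix n n ℂ) i j := by
          rw [trace_std, Matrix.one_apply]
          by_cases h : i = j <;> simp [h, eq_comm]

lemma kron_conjTranspose {m : Type*} [Fintype m] (A : Matrix n n ℂ) (B : Matrix m m ℂ) :
    (A ⊗ₖ B)ᴴ = Aᴴ ⊗ₖ Bᴴ := by
  ext x y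
  simp [Matrix.conjTranspose_apply, Matrix.kroneckerMap_apply, star_mul']

lemma sum_kronecker {m : Type*} [Fintype m] (f : ι → Matrix n n ℂ) (B : Matrix m m ℂ) :
    (∑ k, f k) ⊗ₖ B = ∑ k, (f k) ⊗ₖ B := by
  ext x y
  simp [Matrix.kroneckerMap_apply, Matrix.sum_apply, Finset.sum_mul]

lemma kronecker_sum {m : Type*} [Fintype m] (A : Matrix n n ℂ) (f : ι → Matrix m m ℂ) :
    A ⊗ₖ (∑ k, f k) = ∑ k, A ⊗ₖ (f k) := by
  ext x y
  simp [Matrix.kroneckerMap_apply, Matrix.sum_apply, Finset.mul_sum]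

lemma sum_comm4 {M : Type*} [AddCommMonoid M] {α β γ δ : Type*}
    [Fintype α] [Fintype β] [Fintype γ] [Fintype δ] (F : α → β → γ → δ → M) :
    ∑ i, ∑ j, ∑ p, ∑ q, F i j p q = ∑ p, ∑ q, ∑ i, ∑ j, F i j p q := by
  calc ∑ i, ∑ j, ∑ p, ∑ q, F i j p q
      = ∑ i, ∑ p, ∑ j, ∑ q, F i j p q :=
        Finset.sum_congr rfl fun i _ => Finset.sum_comm
    _ = ∑ p, ∑ i, ∑ j, ∑ q, F i j p q := Finset.sum_comm
    _ = ∑ p, ∑ i, ∑ q, ∑ j, F i j p q :=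
        Finset.sum_congr rfl fun p _ => Finset.sum_congr rfl fun i _ => Finset.sum_comm
    _ = ∑ p, ∑ q, ∑ i, ∑ j, F i j p q :=
        Finset.sum_congr rfl fun p _ => Finset.sum_comm

lemma sandwich_std (U : Matrix n n ℂ) (p q x y : n) :
    (U * Matrix.single p q (1 : ℂ) * Uᴴ) x y = U x p * star (U y q) := by
  rw [sandwich_apply']
  simp only [Matrix.single, Matrix.of_apply, ite_and, mul_ite, mul_one, mul_zero,
    ite_mul, zero_mul]
  rw [Finset.sum_eq_single p]
  · simp
  · intro z _ hz
    simp [Ne.symm hz]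
  · simp

lemma choi_comp (Φi Φo Λ : Matrix n n ℂ →ₗ[ℂ] Matrix n n ℂ)
    (A : ι → Matrix n n ℂ) (C : κ → Matrix n n ℂ)
    (hA : ∀ X, Φi X = ∑ k, A k * X * (A k)ᴴ)
    (hC : ∀ X, Φo X = ∑ l, C l * X * (C l)ᴴ) :
    choi (Φo ∘ₗ Λ ∘ₗ Φi)
      = ∑ k, ∑ l, ((A k)ᵀ ⊗ₖ C l) * choi Λ * ((A k)ᵀ ⊗ₖ C l)ᴴ := by
  classical
  set E : n → n → Matrix n n ℂ := fun i j => Matrix.single i j (1 : ℂ) with hE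
  have hG : ∀ p q, (∑ k, (A k)ᵀ * E p q * ((A k)ᵀ)ᴴ)
      = ∑ i, ∑ j, (Φi (E i j)) p q • E i j := by
    intro p q
    ext x y
    have hL : (∑ k, (A k)ᵀ * E p q * ((A k)ᵀ)ᴴ) x y
        = ∑ k, A k p x * star (A k q y) := by
      simp only [Matrix.sum_apply]
      refine Finset.sum_congr rfl fun k _ => ?_
      rw [hE, sandwich_std]
      simp [Matrix.transpose_apply]
    have hR : (∑ i, ∑ j, (Φi (E i j)) p q • E i j) x y = (Φi (E x y)) p q := by
      simp only [Matrix.sum_apply, Matrix.smul_apply, smul_eq_mul]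
      rw [Finset.sum_eq_single x]
      · rw [Finset.sum_eq_single y]
        · simp [hE, Matrix.single]
        · intro j _ hj
          simp only [hE, Matrix.single, Matrix.of_apply]
          rw [if_neg (fun h => hj h.2), mul_zero]
        · simp
      · intro i _ hi
        refine Finset.sum_eq_zero fun j' _ => ?_
        simp only [hE, Matrix.single, Matrix.of_apply]
        rw [if_neg (fun h => hi h.1), mul_zero]
      · simp
    rw [hL, hR, hA]
    simp only [Matrix.sum_apply]
    refine Finset.sum_congr rfl fun k _ => ?_
    rw [hE, sandwich_std]
  have hexp : ∀ M : Matrix n n ℂ, Φo (Λ M) = ∑ p, ∑ q, M p q • Φo (Λ (E p q)) := by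
    intro M
    conv_lhs => rw [Matrix.matrix_eq_sum_single M]
    rw [map_sum, map_sum]
    refine Finset.sum_congr rfl fun p _ => ?_
    rw [map_sum, map_sum]
    refine Finset.sum_congr rfl fun q _ => ?_
    have h : Matrix.single p q (M p q) = M p q • E p q := by
      rw [hE, Matrix.smul_single, smul_eq_mul, mul_one]
    rw [h, LinearMap.map_smul, LinearMap.map_smul]
  have hmain : ∑ i, ∑ j, E i j ⊗ₖ Φo (Λ (Φi (E i j)))
      = ∑ k, ∑ l, ((A k)ᵀ ⊗ₖ C l) * (∑ p, ∑ q, E p q ⊗ₖ Λ (E p q)) * ((A k)ᵀ ⊗ₖ C l)ᴴ := by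
    calc ∑ i, ∑ j, E i j ⊗ₖ Φo (Λ (Φi (E i j)))
        = ∑ i, ∑ j, ∑ p, ∑ q, (Φi (E i j)) p q • (E i j ⊗ₖ Φo (Λ (E p q))) := by
          refine Finset.sum_congr rfl fun i _ => Finset.sum_congr rfl fun j _ => ?_
          rw [hexp (Φi (E i j)), kronecker_sum]
          refine Finset.sum_congr rfl fun p _ => ?_
          rw [kronecker_sum]
          refine Finset.sum_congr rfl fun q _ => ?_
          rw [Matrix.kronecker_smul]
      _ = ∑ p, ∑ q, ∑ i, ∑ j, (Φi (E i j)) p q • (E i j ⊗ₖ Φo (Λ (E p q))) := sum_comm4 _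
      _ = ∑ p, ∑ q, (∑ k, (A k)ᵀ * E p q * ((A k)ᵀ)ᴴ) ⊗ₖ Φo (Λ (E p q)) := by
          refine Finset.sum_congr rfl fun p _ => Finset.sum_congr rfl fun q _ => ?_
          rw [hG, sum_kronecker]
          refine Finset.sum_congr rfl fun i _ => ?_
          rw [sum_kronecker]
          refine Finset.sum_congr rfl fun j _ => ?_
          rw [Matrix.smul_kronecker]
      _ = ∑ p, ∑ q, ∑ k, ∑ l,
            ((A k)ᵀ * E p q * ((A k)ᵀ)ᴴ) ⊗ₖ (C l * Λ (E p q) * (C l)ᴴ) := by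
          refine Finset.sum_congr rfl fun p _ => Finset.sum_congr rfl fun q _ => ?_
          rw [sum_kronecker]
          refine Finset.sum_congr rfl fun k _ => ?_
          rw [hC, kronecker_sum]
      _ = ∑ k, ∑ l, ∑ p, ∑ q,
            ((A k)ᵀ * E p q * ((A k)ᵀ)ᴴ) ⊗ₖ (C l * Λ (E p q) * (C l)ᴴ) := (sum_comm4 _).symm
      _ = ∑ k, ∑ l, ((A k)ᵀ ⊗ₖ C l) * (∑ p, ∑ q, E p q ⊗ₖ Λ (E p q)) * ((A k)ᵀ ⊗ₖ C l)ᴴ := by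
          refine Finset.sum_congr rfl fun k _ => Finset.sum_congr rfl fun l _ => ?_
          conv_rhs => rw [Finset.mul_sum, Finset.sum_mul]
          refine Finset.sum_congr rfl fun p _ => ?_
          conv_rhs => rw [Finset.mul_sum, Finset.sum_mul]
          refine Finset.sum_congr rfl fun q _ => ?_
          rw [kron_conjTranspose, ← Matrix.mul_kronecker_mul, ← Matrix.mul_kronecker_mul]
  have hchoi : choi (Φo ∘ₗ Λ ∘ₗ Φi)
      = ((Fintype.card n : ℂ))⁻¹ • ∑ i, ∑ j, E i j ⊗ₖ Φo (Λ (Φi (E i j))) := by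
    simp [choi, hE, LinearMap.comp_apply]
  rw [hchoi, hmain]
  unfold choi
  simp only [hE]
  rw [Finset.smul_sum]
  refine Finset.sum_congr rfl fun k _ => ?_
  rw [Finset.smul_sum]
  refine Finset.sum_congr rfl fun l _ => ?_
  rw [Matrix.mul_smul, Matrix.smul_mul]

lemma star_entry_one {m : Type*} [Fintype m] [DecidableEq m]
    (f : ι → Matrix m m ℂ) (h : ∑ k, f k = 1) (x y : m) :
    star ((∑ k, f k) x y) = (1 : Matrix m m ℂ) x y := by
  rw [h, Matrix.one_apply]
  split_ifs <;> simp

lemma transpose_kraus_tp (A : ι → Matrix n n ℂ) (hU : ∑ k, A k * (A k)ᴴ = 1) :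
    ∑ k, ((A k)ᵀ)ᴴ * (A k)ᵀ = 1 := by
  ext x y
  calc (∑ k, ((A k)ᵀ)ᴴ * (A k)ᵀ) x y
      = star ((∑ k, A k * (A k)ᴴ) x y) := by
        simp only [Matrix.sum_apply, Matrix.mul_apply, Matrix.conjTranspose_apply,
          Matrix.transpose_apply, star_sum, star_mul', star_star]
    _ = (1 : Matrix n n ℂ) x y := star_entry_one _ hU x y
  
lemma transpose_kraus_u (A : ι → Matrix n n ℂ) (hTP : ∑ k, (A k)ᴴ * A k = 1) :
    ∑ k, (A k)ᵀ * ((A k)ᵀ)ᴴ = 1 := by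
  ext x y
  calc (∑ k, (A k)ᵀ * ((A k)ᵀ)ᴴ) x y
      = star ((∑ k, (A k)ᴴ * A k) x y) := by
        simp only [Matrix.sum_apply, Matrix.mul_apply, Matrix.conjTranspose_apply,
          Matrix.transpose_apply, star_sum, star_mul', star_star]
    _ = (1 : Matrix n n ℂ) x y := star_entry_one _ hTP x y

end Helpers

theorem statement13 (d : ℕ)
    (Λ Γ Φi Φo : Matrix (Fin d) (Fin d) ℂ →ₗ[ℂ] Matrix (Fin d) (Fin d) ℂ)
    (hΛ : IsChannel Λ) (hΓ : IsChannel Γ)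
    (hΦi : IsChannel Φi) (hΦiUnital : Φi 1 = 1)
    (hΦo : IsChannel Φo) (hΦoUnital : Φo 1 = 1) :
    davCh (Φo ∘ₗ Λ ∘ₗ Φi) (Φo ∘ₗ Γ ∘ₗ Φi) ≤ davCh Λ Γ := by
  classical
  by_cases hd : d = 0
  · subst hd
    have hz : ∀ P : Matrix (Fin 0 × Fin 0) (Fin 0 × Fin 0) ℂ, hsNorm P = 0 := by
      intro P
      simp [hsNorm, Matrix.trace]
    have hz2 : ∀ P : Matrix (Fin 0) (Fin 0) ℂ, hsNorm P = 0 := by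
      intro P
      simp [hsNorm, Matrix.trace]
    unfold davCh
    simp only [hz, hz2]
    exact le_refl _
  · have hn : (Fintype.card (Fin d) : ℂ) ≠ 0 := by
      simp [Fintype.card_fin, hd]
    obtain ⟨A, hA, hATP⟩ := exists_kraus hn Φi hΦi
    obtain ⟨C, hC, hCTP⟩ := exists_kraus hn Φo hΦo
    have hAU : ∑ k, A k * (A k)ᴴ = 1 := by
      have h := hA 1
      rw [hΦiUnital] at h
      simpa [Matrix.mul_one] using h.symm
    have hCU : ∑ l, C l * (C l)ᴴ = 1 := by
      have h := hC 1
      rw [hΦoUnital] at h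
      simpa [Matrix.mul_one] using h.symm
    set K : (Fin d × Fin d) × (Fin d × Fin d) → Matrix (Fin d × Fin d) (Fin d × Fin d) ℂ :=
      fun kl => (A kl.1)ᵀ ⊗ₖ C kl.2 with hK
    have hKTP : ∑ kl, (K kl)ᴴ * K kl = 1 := by
      rw [Fintype.sum_prod_type]
      calc ∑ k, ∑ l, (K (k, l))ᴴ * K (k, l)
          = ∑ k, (((A k)ᵀ)ᴴ * (A k)ᵀ) ⊗ₖ (∑ l, (C l)ᴴ * C l) := by
            refine Finset.sum_congr rfl fun k _ => ?_
            rw [kronecker_sum]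
            refine Finset.sum_congr rfl fun l _ => ?_
            rw [hK]
            simp only
            rw [kron_conjTranspose, ← Matrix.mul_kronecker_mul]
        _ = (∑ k, ((A k)ᵀ)ᴴ * (A k)ᵀ) ⊗ₖ (1 : Matrix (Fin d) (Fin d) ℂ) := by
            rw [hCTP, sum_kronecker]
        _ = 1 := by rw [transpose_kraus_tp A hAU, Matrix.one_kronecker_one]
    have hKU : ∑ kl, K kl * (K kl)ᴴ = 1 := by
      rw [Fintype.sum_prod_type]
      calc ∑ k, ∑ l, K (k, l) * (K (k, l))ᴴ
          = ∑ k, ((A k)ᵀ * ((A k)ᵀ)ᴴ) ⊗ₖ (∑ l, C l * (C l)ᴴ) := by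
            refine Finset.sum_congr rfl fun k _ => ?_
            rw [kronecker_sum]
            refine Finset.sum_congr rfl fun l _ => ?_
            rw [hK]
            simp only
            rw [kron_conjTranspose, ← Matrix.mul_kronecker_mul]
        _ = (∑ k, (A k)ᵀ * ((A k)ᵀ)ᴴ) ⊗ₖ (1 : Matrix (Fin d) (Fin d) ℂ) := by
            rw [hCU, sum_kronecker]
        _ = 1 := by rw [transpose_kraus_u A hATP, Matrix.one_kronecker_one]
    have hdouble : ∑ k, ∑ l, ((A k)ᵀ ⊗ₖ C l) * choi Λ * ((A k)ᵀ ⊗ₖ C l)ᴴ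
          - ∑ k, ∑ l, ((A k)ᵀ ⊗ₖ C l) * choi Γ * ((A k)ᵀ ⊗ₖ C l)ᴴ
        = ∑ k, ∑ l, ((A k)ᵀ ⊗ₖ C l) * (choi Λ - choi Γ) * ((A k)ᵀ ⊗ₖ C l)ᴴ := by
      rw [← Finset.sum_sub_distrib]
      refine Finset.sum_congr rfl fun k _ => ?_
      rw [← Finset.sum_sub_distrib]
      refine Finset.sum_congr rfl fun l _ => ?_
      rw [Matrix.mul_sub, Matrix.sub_mul]
    have hdiff : choi (Φo ∘ₗ Λ ∘ₗ Φi) - choi (Φo ∘ₗ Γ ∘ₗ Φi)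
        = ∑ kl, K kl * (choi Λ - choi Γ) * (K kl)ᴴ := by
      rw [choi_comp Φi Φo Λ A C hA hC, choi_comp Φi Φo Γ A C hA hC, hdouble]
      exact (Fintype.sum_prod_type
        (f := fun kl : (Fin d × Fin d) × (Fin d × Fin d) =>
          K kl * (choi Λ - choi Γ) * (K kl)ᴴ)).symm
    have hterm1 : hsNorm (choi (Φo ∘ₗ Λ ∘ₗ Φi) - choi (Φo ∘ₗ Γ ∘ₗ Φi))
        ≤ hsNorm (choi Λ - choi Γ) := by
      rw [hdiff]
      unfold hsNorm
      exact Real.sqrt_le_sqrt (kraus_contract K hKTP hKU _)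
    have hu : Φi (((Fintype.card (Fin d) : ℂ))⁻¹ • 1) = ((Fintype.card (Fin d) : ℂ))⁻¹ • 1 := by
      rw [LinearMap.map_smul, hΦiUnital]
    have hterm2 : hsNorm ((Φo ∘ₗ Λ ∘ₗ Φi) (((Fintype.card (Fin d) : ℂ))⁻¹ • 1)
          - (Φo ∘ₗ Γ ∘ₗ Φi) (((Fintype.card (Fin d) : ℂ))⁻¹ • 1))
        ≤ hsNorm (Λ (((Fintype.card (Fin d) : ℂ))⁻¹ • 1)
          - Γ (((Fintype.card (Fin d) : ℂ))⁻¹ • 1)) := by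
      have heq : (Φo ∘ₗ Λ ∘ₗ Φi) (((Fintype.card (Fin d) : ℂ))⁻¹ • 1)
            - (Φo ∘ₗ Γ ∘ₗ Φi) (((Fintype.card (Fin d) : ℂ))⁻¹ • 1)
          = ∑ l, C l * (Λ (((Fintype.card (Fin d) : ℂ))⁻¹ • 1)
              - Γ (((Fintype.card (Fin d) : ℂ))⁻¹ • 1)) * (C l)ᴴ := by
        simp only [LinearMap.comp_apply, hu]
        rw [← map_sub, hC]
      rw [heq]
      unfold hsNorm
      exact Real.sqrt_le_sqrt (kraus_contract C hCTP hCU _)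
    unfold davCh
    refine mul_le_mul_of_nonneg_left ?_ (by norm_num)
    refine Real.sqrt_le_sqrt ?_
    refine add_le_add ?_ ?_
    · exact pow_le_pow_left₀ (Real.sqrt_nonneg _) hterm1 2
    · exact pow_le_pow_left₀ (Real.sqrt_nonneg _) hterm2 2
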